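/- Stability-stack counting invariant: Consider an abstract transition system on pairs (schedule, stack) where the schedule is a list over symbols {Step, Fix(·), aFix(·)} with rules: FixInit replaces a leading Fix(sc) by sc ++ [aFix(sc)] and pushes one Boolean onto the stack; FixIter replaces a leading aFix(sc) by sc ++ [aFix(sc)] leaving stack size unchanged (pops one, pushes one); FixTerm removes a leading aFix(sc) and pops one Boolean; Step transitions remove a leading Step symbol without touching the stack. Then in every state reachable from an initial state whose schedule contains no aFix and whose stack is empty, the length of the stability stack equals the number of aFix symbols occurring in the schedule. -/

import Mathlib

/-- Schedule symbols: step executions, fixpoints, and activated fixpoints. -/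
inductive SchedSym : Type
  | step : SchedSym
  | fix : List SchedSym → SchedSym
  | afix : List SchedSym → SchedSym

mutual
/-- Number of `afix` occurrences in a symbol, including nested ones. -/
def countAFix : SchedSym → ℕ
  | SchedSym.step => 0
  | SchedSym.fix l => countAFixL l
  | SchedSym.afix l => countAFixL l + 1
/-- Number of `afix` occurrences in a schedule, including nested ones. -/
def countAFixL : List SchedSym → ℕ
  | [] => 0
  | s :: rest => countAFix s + countAFixL rest
end

/-- Transitions on (schedule, stability stack) pairs. -/
inductive SchedTrans : (List SchedSym × List Bool) → (List SchedSym × List Bool) → Prop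
  | fixInit (sc rest : List SchedSym) (stk : List Bool) (b : Bool) :
      SchedTrans (SchedSym.fix sc :: rest, stk) (sc ++ SchedSym.afix sc :: rest, b :: stk)
  | fixIter (sc rest : List SchedSym) (stk : List Bool) (b b' : Bool) :
      SchedTrans (SchedSym.afix sc :: rest, b :: stk) (sc ++ SchedSym.afix sc :: rest, b' :: stk)
  | fixTerm (sc rest : List SchedSym) (stk : List Bool) (b : Bool) :
      SchedTrans (SchedSym.afix sc :: rest, b :: stk) (rest, stk)
  | stepT (rest : List SchedSym) (stk : List Bool) :
      SchedTrans (SchedSym.step :: rest, stk) (rest, stk)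


def symOk : SchedSym → Prop
  | SchedSym.step => True
  | SchedSym.fix l => countAFixL l = 0
  | SchedSym.afix l => countAFixL l = 0

lemma symOk_of_count_zero {l : List SchedSym} (h : countAFixL l = 0) :
    ∀ x ∈ l, symOk x := by
  induction l with
  | nil => intro x hx; cases hx
  | cons a t ih =>
    rw [countAFixL] at h
    have ha : countAFix a = 0 := by omega
    have ht : countAFixL t = 0 := by omega
    intro x hx
    rw [List.mem_cons] at hx
    rcases hx with rfl | hx
    · cases x with
      | step => trivial
      | fix l => rw [countAFix] at ha; rw [symOk]; exact ha
      | afix l => rw [countAFix] at ha; omega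
    · exact ih ht x hx

lemma countAFixL_append (a b : List SchedSym) :
    countAFixL (a ++ b) = countAFixL a + countAFixL b := by
  induction a with
  | nil => simp [countAFixL]
  | cons x t ih => simp [countAFixL, ih]; omega

lemma stability_aux (sched₀ : List SchedSym) (h0 : countAFixL sched₀ = 0)
    (s : List SchedSym × List Bool)
    (hs : Relation.ReflTransGen SchedTrans (sched₀, []) s) :
    (∀ x ∈ s.1, symOk x) ∧ s.2.length = countAFixL s.1 := by
  induction hs with
  | refl => exact ⟨symOk_of_count_zero h0, by simp [h0]⟩
  | tail _ hbc ih =>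
    obtain ⟨hok, hlen⟩ := ih
    cases hbc with
    | fixInit sc rest stk b =>
      have hsc : countAFixL sc = 0 := by
        have := hok (SchedSym.fix sc) List.mem_cons_self; rwa [symOk] at this
      have hrest : ∀ x ∈ rest, symOk x := fun x hx => hok x (List.mem_cons_of_mem _ hx)
      constructor
      · intro x hx
        simp only [List.mem_append, List.mem_cons] at hx
        rcases hx with hx | hx | hx
        · exact symOk_of_count_zero hsc x hx
        · subst hx; rw [symOk]; exact hsc
        · exact hrest x hx
      · simp only [List.length, countAFixL_append, countAFixL, countAFix, hsc] at *
        omega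
    | fixIter sc rest stk b b' =>
      have hsc : countAFixL sc = 0 := by
        have := hok (SchedSym.afix sc) List.mem_cons_self; rwa [symOk] at this
      have hrest : ∀ x ∈ rest, symOk x := fun x hx => hok x (List.mem_cons_of_mem _ hx)
      constructor
      · intro x hx
        simp only [List.mem_append, List.mem_cons] at hx
        rcases hx with hx | hx | hx
        · exact symOk_of_count_zero hsc x hx
        · subst hx; rw [symOk]; exact hsc
        · exact hrest x hx
      · simp only [List.length, countAFixL_append, countAFixL, countAFix, hsc] at *
        omega
    | fixTerm sc rest stk b =>
      have hsc : countAFixL sc = 0 := by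
        have := hok (SchedSym.afix sc) List.mem_cons_self; rwa [symOk] at this
      refine ⟨fun x hx => hok x (List.mem_cons_of_mem _ hx), ?_⟩
      simp only [List.length, countAFixL, countAFix, hsc] at *
      omega
    | stepT rest stk =>
      refine ⟨fun x hx => hok x (List.mem_cons_of_mem _ hx), ?_⟩
      simp only [countAFixL, countAFix] at *
      omega

/-- Stability-stack counting invariant: from an initial state whose schedule contains no
`afix` and whose stack is empty, every reachable state has stack length equal to the
number of `afix` occurrences in its schedule. -/
theorem stability_stack_invariant
    (sched₀ : List SchedSym) (h0 : countAFixL sched₀ = 0)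
    (s : List SchedSym × List Bool)
    (hs : Relation.ReflTransGen SchedTrans (sched₀, []) s) :
    s.2.length = countAFixL s.1 := by
  exact (stability_aux sched₀ h0 s hs).2
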